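/- For every polytope P in R^n, P = (n/(n+1))P + (1/(n+1))V(P), where V(P) denotes the set of vertices of P and + denotes Minkowski sum. -/

import Mathlib

open Set Pointwise Metric

/-- A polytope is the convex hull of finitely many points. -/
def IsPolytope {n : ℕ} (P : Set (EuclideanSpace ℝ (Fin n))) : Prop :=
  ∃ S : Finset (EuclideanSpace ℝ (Fin n)), P = convexHull ℝ (S : Set (EuclideanSpace ℝ (Fin n)))

theorem stmt_0 {n : ℕ} (P : Set (EuclideanSpace ℝ (Fin n))) (hP : IsPolytope P) :
    P = ((n : ℝ) / ((n : ℝ) + 1)) • P + (((n : ℝ) + 1)⁻¹) • (P.extremePoints ℝ) := by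
  classical
  obtain ⟨S, rfl⟩ := hP
  set P : Set (EuclideanSpace ℝ (Fin n)) := convexHull ℝ (S : Set (EuclideanSpace ℝ (Fin n)))
    with hPdef
  have hconv : Convex ℝ P := convex_convexHull ℝ _
  have hc0 : (0:ℝ) ≤ (n : ℝ) / ((n : ℝ) + 1) := by positivity
  have hc1 : (0:ℝ) ≤ ((n : ℝ) + 1)⁻¹ := by positivity
  have hcs : (n : ℝ) / ((n : ℝ) + 1) + ((n : ℝ) + 1)⁻¹ = 1 := by
    field_simp
  apply Set.Subset.antisymm
  · -- hard direction
    intro x hx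
    rcases eq_or_ne n 0 with hn | hn
    · -- subsingleton case
      subst hn
      haveI : Subsingleton (EuclideanSpace ℝ (Fin 0)) :=
        ⟨fun a b => PiLp.ext fun i => i.elim0⟩
      have hxe : x ∈ P.extremePoints ℝ := by
        refine mem_extremePoints.2 ⟨hx, fun x1 hx1 x2 hx2 _ => ?_⟩
        exact ⟨Subsingleton.elim _ _, Subsingleton.elim _ _⟩
      exact Set.mem_add.2 ⟨_, Set.smul_mem_smul_set hx, _, Set.smul_mem_smul_set hxe,
        Subsingleton.elim _ _⟩
    · -- n ≥ 1
      have hcompact : IsCompact P := S.finite_toSet.isCompact_convexHull ℝ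
      have hE : P = convexHull ℝ (P.extremePoints ℝ) := by
        have hEsub : P.extremePoints ℝ ⊆ (S : Set _) := extremePoints_convexHull_subset
        have hfin : (P.extremePoints ℝ).Finite := S.finite_toSet.subset hEsub
        have h := closure_convexHull_extremePoints hcompact hconv
        rw [(hfin.isCompact_convexHull ℝ).isClosed.closure_eq] at h
        exact h.symm
      obtain ⟨ι, hfin, z, w, hzE, haff, hw0, hw1, hsum⟩ :=
        eq_pos_convex_span_of_mem_convexHull (hE ▸ hx)
      have hcard : Fintype.card ι ≤ n + 1 := by
        refine haff.card_le_finrank_succ.trans ?_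
        have h1 : Module.finrank ℝ ↥(vectorSpan ℝ (Set.range z)) ≤
            Module.finrank ℝ (EuclideanSpace ℝ (Fin n)) := Submodule.finrank_le _
        rw [finrank_euclideanSpace_fin] at h1
        omega
      have hne : Nonempty ι := by
        by_contra h
        rw [not_nonempty_iff] at h
        simp [Finset.univ_eq_empty] at hw1
      obtain ⟨j, hj⟩ : ∃ j, ((n : ℝ) + 1)⁻¹ ≤ w j := by
        by_contra h
        push_neg at h
        have : (1:ℝ) < 1 := by
          calc (1:ℝ) = ∑ i, w i := hw1.symm
          _ < ∑ _i : ι, ((n : ℝ) + 1)⁻¹ :=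
              Finset.sum_lt_sum_of_nonempty Finset.univ_nonempty fun i _ => h i
          _ = (Fintype.card ι : ℝ) * ((n : ℝ) + 1)⁻¹ := by
              simp [Finset.sum_const, nsmul_eq_mul]
          _ ≤ ((n : ℝ) + 1) * ((n : ℝ) + 1)⁻¹ := by
              apply mul_le_mul_of_nonneg_right _ (by positivity)
              exact_mod_cast hcard
          _ = 1 := by field_simp
        exact absurd this (lt_irrefl 1)
      have hnpos : (0:ℝ) < (n : ℝ) := by
        exact_mod_cast Nat.pos_of_ne_zero hn
      set c : ℝ := ((n : ℝ) + 1) / (n : ℝ) with hcdef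
      have hcpos : (0:ℝ) < c := by positivity
      set d : ι → ℝ := fun i => if i = j then ((n : ℝ) + 1)⁻¹ else 0 with hddef
      set w' : ι → ℝ := fun i => c * (w i - d i) with hw'def
      have hw'0 : ∀ i, 0 ≤ w' i := by
        intro i
        apply mul_nonneg hcpos.le
        by_cases hij : i = j
        · subst hij; simp [hddef, sub_nonneg, hj]
        · simp [hddef, hij, (hw0 i).le]
      have hsumd : ∑ i, d i = ((n : ℝ) + 1)⁻¹ := by
        simp [hddef, Finset.sum_ite_eq']
      have hw'1 : ∑ i, w' i = 1 := by
        simp only [hw'def]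
        rw [← Finset.mul_sum, Finset.sum_sub_distrib, hw1, hsumd, hcdef]
        field_simp
        ring
      set p : EuclideanSpace ℝ (Fin n) := ∑ i, w' i • z i with hpdef
      have hpP : p ∈ P := by
        rw [hE]
        exact mem_convexHull_of_exists_fintype w' z hw'0 hw'1
          (fun i => hzE ⟨i, rfl⟩) rfl
      have hjE : z j ∈ P.extremePoints ℝ := hzE ⟨j, rfl⟩
      have key : ((n : ℝ) / ((n : ℝ) + 1)) • p = ∑ i, (w i - d i) • z i := by
        rw [hpdef, Finset.smul_sum]
        refine Finset.sum_congr rfl fun i _ => ?_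
        rw [smul_smul]
        congr 1
        rw [hw'def, hcdef]
        field_simp
      have key2 : ∑ i, d i • z i = ((n : ℝ) + 1)⁻¹ • z j := by
        simp [hddef, ite_smul, Finset.sum_ite_eq']
      have hxeq : x = ((n : ℝ) / ((n : ℝ) + 1)) • p + (((n : ℝ) + 1)⁻¹) • z j := by
        rw [key, ← key2]
        simp only [sub_smul, Finset.sum_sub_distrib, hsum]
        abel
      rw [hxeq]
      exact Set.add_mem_add (Set.smul_mem_smul_set hpP) (Set.smul_mem_smul_set hjE)
  · -- easy direction
    rintro x ⟨a, ⟨p, hp, rfl⟩, b, ⟨v, hv, rfl⟩, rfl⟩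
    exact hconv hp (extremePoints_subset hv) hc0 hc1 hcs
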